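/- The automorphism group of the intersection lattice of the generic 13-hyperplane arrangement 𝒜_t is isomorphic to (ℤ/3ℤ) ⋊ S_3, a group of order 18. Equivalently, the group of permutations of the 13 hyperplane labels preserving the incidence structure given by the 13 listed lines-per-hyperplane sets has order 18 and this semidirect product structure. -/

import Mathlib

open scoped Classical

noncomputable section

/-- The incidence data of the intersection lattice of the generic 13-hyperplane
arrangement: the set of (0-indexed) lines lying on each of the 13 hyperplanes. -/
def lineSets : Fin 13 → Finset (Fin 30) :=
  ![{0, 1, 2, 3, 4, 5}, {0, 6, 7, 8, 9, 10}, {1, 6, 11, 12, 13, 14},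
    {1, 7, 15, 16, 17, 18}, {2, 6, 15, 19, 20, 21}, {2, 7, 11, 22, 23, 24},
    {1, 8, 19, 22, 25, 26}, {3, 6, 16, 23, 25, 27}, {3, 8, 11, 17, 20, 28},
    {4, 9, 11, 16, 19, 29}, {3, 7, 12, 21, 26, 29}, {5, 7, 13, 19, 27, 28},
    {3, 10, 14, 18, 19, 24}]

/-- The automorphism group of the intersection lattice: pairs of permutations of the
13 hyperplanes and of the 30 lines preserving incidence. -/
def latAut : Subgroup (Equiv.Perm (Fin 13) × Equiv.Perm (Fin 30)) where
  carrier := {p | ∀ h l, l ∈ lineSets h ↔ p.2 l ∈ lineSets (p.1 h)}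
  one_mem' := by intro h l; simp
  mul_mem' := by
    intro a b ha hb h l
    exact (hb h l).trans (ha (b.1 h) (b.2 l))
  inv_mem' := by
    intro a ha h l
    simpa using (ha (a.1⁻¹ h) (a.2⁻¹ l)).symm

/-! ### Auxiliary combinatorial invariants -/

/-- The number of hyperplanes containing a given line. -/
def deg (l : Fin 30) : ℕ := (Finset.univ.filter (fun h => l ∈ lineSets h)).card

/-- The sum of degrees of the lines common to two hyperplanes. -/
def Dm (h h' : Fin 13) : ℕ := (lineSets h ∩ lineSets h').sum deg

/-- The number of degree-5 lines on a hyperplane. -/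
def n5 (h : Fin 13) : ℕ := ((lineSets h).filter (fun l => deg l = 5)).card

/-- Explicit table for `Dm`. -/
def DmM : Fin 13 → Fin 13 → ℕ :=
  ![![18, 2, 4, 4, 3, 3, 4, 5, 5, 2, 5, 2, 5],
    ![2, 18, 4, 5, 4, 5, 3, 4, 3, 2, 5, 5, 2],
    ![4, 4, 18, 4, 4, 4, 4, 4, 4, 4, 2, 2, 2],
    ![4, 5, 4, 18, 2, 5, 4, 3, 2, 3, 5, 5, 2],
    ![3, 4, 4, 2, 18, 3, 5, 4, 2, 5, 2, 5, 5],
    ![3, 5, 4, 5, 3, 18, 2, 2, 4, 4, 5, 5, 2],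
    ![4, 3, 4, 4, 5, 2, 18, 2, 3, 5, 2, 5, 5],
    ![5, 4, 4, 3, 4, 2, 2, 18, 5, 3, 5, 2, 5],
    ![5, 3, 4, 2, 2, 4, 3, 5, 18, 4, 5, 2, 5],
    ![2, 2, 4, 3, 5, 4, 5, 3, 4, 18, 2, 5, 5],
    ![5, 5, 2, 5, 2, 5, 2, 5, 5, 2, 18, 5, 5],
    ![2, 5, 2, 5, 5, 5, 5, 2, 2, 5, 5, 18, 5],
    ![5, 2, 2, 2, 5, 2, 5, 5, 5, 5, 5, 5, 18]]

/-- Explicit table for `n5`. -/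
def n5M : Fin 13 → ℕ := ![1, 1, 0, 1, 1, 1, 1, 1, 1, 1, 2, 2, 2]

lemma Dm_eq_DmM : ∀ h h', Dm h h' = DmM h h' := by decide

lemma n5_eq_n5M : ∀ h, n5 h = n5M h := by decide

/-- The signature map `x ↦ (n5M x, DmM x a, DmM x b)` is injective for any admissible
pair `(a, b)`. -/
lemma factAB : ∀ a b : Fin 13, n5M a = 1 → n5M b = 1 → DmM a b = 2 →
    ∀ x y : Fin 13, n5M x = n5M y → DmM x a = DmM y a → DmM x b = DmM y b → x = y := by
  decide

/-- A line is determined by the set of hyperplanes through it. -/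
lemma factC : ∀ l l' : Fin 30, (∀ h, l ∈ lineSets h ↔ l' ∈ lineSets h) → l = l' := by
  decide

lemma mem_latAut {p : Equiv.Perm (Fin 13) × Equiv.Perm (Fin 30)} :
    p ∈ latAut ↔ ∀ h l, l ∈ lineSets h ↔ p.2 l ∈ lineSets (p.1 h) := Iff.rfl

/-! ### Invariance lemmas -/

section invariance

variable {p : Equiv.Perm (Fin 13) × Equiv.Perm (Fin 30)}

lemma image_lineSets (hp : p ∈ latAut) (h : Fin 13) : (lineSets h).image p.2 = lineSets (p.1 h) := by
  ext l
  simp only [Finset.mem_image]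
  constructor
  · rintro ⟨m, hm, rfl⟩; exact (hp h m).1 hm
  · intro hl
    exact ⟨p.2⁻¹ l, (hp h _).2 (by simpa using hl), by simp⟩

lemma filter_eq_image (hp : p ∈ latAut) (l : Fin 30) :
    Finset.univ.filter (fun h => p.2 l ∈ lineSets h)
      = (Finset.univ.filter (fun h => l ∈ lineSets h)).image p.1 := by
  ext h
  simp only [Finset.mem_image, Finset.mem_filter, Finset.mem_univ, true_and]
  constructor
  · intro hl
    exact ⟨p.1⁻¹ h, (hp _ l).2 (by simpa using hl), by simp⟩
  · rintro ⟨m, hm, rfl⟩; exact (hp m l).1 hm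

lemma deg_invariant (hp : p ∈ latAut) (l : Fin 30) : deg (p.2 l) = deg l := by
  unfold deg
  rw [filter_eq_image hp, Finset.card_image_of_injective _ p.1.injective]

lemma Dm_invariant (hp : p ∈ latAut) (h h' : Fin 13) : Dm (p.1 h) (p.1 h') = Dm h h' := by
  unfold Dm
  rw [← image_lineSets hp h, ← image_lineSets hp h',
    ← Finset.image_inter _ _ p.2.injective,
    Finset.sum_image (fun x _ y _ hxy => p.2.injective hxy)]
  exact Finset.sum_congr rfl fun l _ => deg_invariant hp l

lemma n5_invariant (hp : p ∈ latAut) (h : Fin 13) : n5 (p.1 h) = n5 h := by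
  unfold n5
  rw [← image_lineSets hp h, Finset.filter_image]
  rw [Finset.card_image_of_injective _ p.2.injective]
  congr 1
  exact Finset.filter_congr fun l _ => by simp [Function.comp, deg_invariant hp l]

lemma n5M_invariant (hp : p ∈ latAut) (h : Fin 13) : n5M (p.1 h) = n5M h := by
  rw [← n5_eq_n5M, ← n5_eq_n5M]; exact n5_invariant hp h

lemma DmM_invariant (hp : p ∈ latAut) (h h' : Fin 13) : DmM (p.1 h) (p.1 h') = DmM h h' := by
  rw [← Dm_eq_DmM, ← Dm_eq_DmM]; exact Dm_invariant hp h h'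

end invariance

/-! ### Rigidity: an automorphism is determined by the images of hyperplanes 0 and 1 -/

lemma latAut_rigid {p q : Equiv.Perm (Fin 13) × Equiv.Perm (Fin 30)}
    (hp : p ∈ latAut) (hq : q ∈ latAut)
    (h0 : p.1 0 = q.1 0) (h1 : p.1 1 = q.1 1) : p = q := by
  have ha : n5M (p.1 0) = 1 := by rw [n5M_invariant hp]; rfl
  have hb : n5M (p.1 1) = 1 := by rw [n5M_invariant hp]; rfl
  have hab : DmM (p.1 0) (p.1 1) = 2 := by rw [DmM_invariant hp]; rfl
  have h13 : ∀ h, p.1 h = q.1 h := by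
    intro h
    refine factAB (p.1 0) (p.1 1) ha hb hab (p.1 h) (q.1 h) ?_ ?_ ?_
    · rw [n5M_invariant hp, n5M_invariant hq]
    · rw [DmM_invariant hp, h0, ← DmM_invariant hq h 0]
    · rw [DmM_invariant hp, h1, ← DmM_invariant hq h 1]
  have hfst : p.1 = q.1 := Equiv.ext h13
  have hsnd : p.2 = q.2 := by
    apply Equiv.ext
    intro l
    apply factC
    intro h
    have hp' := hp (p.1⁻¹ h) l
    have hq' := hq (p.1⁻¹ h) l
    rw [Equiv.Perm.coe_inv, Equiv.apply_symm_apply] at hp'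
    rw [← hfst, Equiv.Perm.coe_inv, Equiv.apply_symm_apply] at hq'
    exact hp'.symm.trans hq'
  exact Prod.ext hfst hsnd

/-- The set of admissible images of the pair of hyperplanes (0,1). -/
def Pset : Finset (Fin 13 × Fin 13) :=
  Finset.univ.filter (fun ab => n5M ab.1 = 1 ∧ n5M ab.2 = 1 ∧ DmM ab.1 ab.2 = 2)

lemma Pset_card : Pset.card = 18 := by decide

lemma card_latAut_le : Nat.card latAut ≤ 18 := by
  have hinj : Function.Injective
      (fun p : latAut => (⟨(p.1.1 0, p.1.1 1), by
        have hp := p.2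
        simp only [Pset, Finset.mem_filter, Finset.mem_univ, true_and]
        refine ⟨?_, ?_, ?_⟩
        · rw [n5M_invariant hp]; rfl
        · rw [n5M_invariant hp]; rfl
        · rw [DmM_invariant hp]; rfl⟩ : {ab // ab ∈ Pset})) := by
    intro p q hpq
    have h : ((p.1.1 0, p.1.1 1) : Fin 13 × Fin 13) = (q.1.1 0, q.1.1 1) :=
      congrArg Subtype.val hpq
    exact Subtype.ext (latAut_rigid p.2 q.2 (congrArg Prod.fst h) (congrArg Prod.snd h))
  calc Nat.card latAut ≤ Nat.card {ab // ab ∈ Pset} :=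
        Nat.card_le_card_of_injective _ hinj
    _ = Pset.card := Nat.card_eq_finsetCard Pset
    _ = 18 := Pset_card

/-! ### Explicit generators of the automorphism group -/

/-- An automorphism of order 3 generating the normal `ℤ/3` factor. -/
def cElt : Equiv.Perm (Fin 13) × Equiv.Perm (Fin 30) :=
  (⟨![3, 4, 2, 6, 7, 9, 0, 1, 5, 8, 11, 12, 10], ![6, 7, 2, 0, 1, 8, 3, 4, 9, 5, 12, 10, 11], by decide, by decide⟩,
   ⟨![15, 1, 16, 7, 17, 18, 6, 19, 2, 20, 21, 11, 13, 14, 12, 25, 8, 22, 26, 3, 23, 27, 4, 9, 29, 0, 5, 10, 24, 28], ![25, 1, 8, 19, 22, 26, 6, 3, 16, 23, 27, 11, 14, 12, 13, 0, 2, 4, 5, 7, 9, 10, 17, 20, 28, 15, 18, 21, 29, 24], by decide, by decide⟩)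

def k01 : Equiv.Perm (Fin 13) × Equiv.Perm (Fin 30) :=
  (⟨![0, 9, 2, 6, 5, 4, 3, 8, 7, 1, 12, 11, 10], ![0, 9, 2, 6, 5, 4, 3, 8, 7, 1, 12, 11, 10], by decide, by decide⟩,
   ⟨![4, 1, 2, 3, 0, 5, 11, 19, 16, 9, 29, 6, 14, 13, 12, 22, 8, 25, 26, 7, 23, 24, 15, 20, 21, 17, 18, 28, 27, 10], ![4, 1, 2, 3, 0, 5, 11, 19, 16, 9, 29, 6, 14, 13, 12, 22, 8, 25, 26, 7, 23, 24, 15, 20, 21, 17, 18, 28, 27, 10], by decide, by decide⟩)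

def k012 : Equiv.Perm (Fin 13) × Equiv.Perm (Fin 30) :=
  (⟨![1, 9, 2, 4, 8, 6, 7, 5, 3, 0, 11, 12, 10], ![9, 0, 2, 8, 3, 7, 5, 6, 4, 1, 12, 10, 11], by decide, by decide⟩,
   ⟨![9, 6, 8, 7, 0, 10, 11, 19, 16, 4, 29, 1, 13, 14, 12, 20, 2, 15, 21, 3, 17, 28, 25, 22, 26, 23, 27, 24, 18, 5], ![4, 11, 16, 19, 9, 29, 1, 3, 2, 0, 5, 6, 14, 12, 13, 17, 8, 20, 28, 7, 15, 18, 23, 25, 27, 22, 24, 26, 21, 10], by decide, by decide⟩)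

def k021 : Equiv.Perm (Fin 13) × Equiv.Perm (Fin 30) :=
  (⟨![9, 0, 2, 8, 3, 7, 5, 6, 4, 1, 12, 10, 11], ![1, 9, 2, 4, 8, 6, 7, 5, 3, 0, 11, 12, 10], by decide, by decide⟩,
   ⟨![4, 11, 16, 19, 9, 29, 1, 3, 2, 0, 5, 6, 14, 12, 13, 17, 8, 20, 28, 7, 15, 18, 23, 25, 27, 22, 24, 26, 21, 10], ![9, 6, 8, 7, 0, 10, 11, 19, 16, 4, 29, 1, 13, 14, 12, 20, 2, 15, 21, 3, 17, 28, 25, 22, 26, 23, 27, 24, 18, 5], by decide, by decide⟩)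

def ka : Equiv.Perm (Fin 13) × Equiv.Perm (Fin 30) :=
  (⟨![1, 0, 2, 7, 6, 8, 4, 3, 5, 9, 10, 12, 11], ![1, 0, 2, 7, 6, 8, 4, 3, 5, 9, 10, 12, 11], by decide, by decide⟩,
   ⟨![0, 6, 8, 7, 9, 10, 1, 3, 2, 4, 5, 11, 12, 14, 13, 25, 16, 23, 27, 19, 22, 26, 20, 17, 28, 15, 21, 18, 24, 29], ![0, 6, 8, 7, 9, 10, 1, 3, 2, 4, 5, 11, 12, 14, 13, 25, 16, 23, 27, 19, 22, 26, 20, 17, 28, 15, 21, 18, 24, 29], by decide, by decide⟩)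

def kb : Equiv.Perm (Fin 13) × Equiv.Perm (Fin 30) :=
  (⟨![9, 1, 2, 5, 7, 3, 8, 4, 6, 0, 11, 10, 12], ![9, 1, 2, 5, 7, 3, 8, 4, 6, 0, 11, 10, 12], by decide, by decide⟩,
   ⟨![9, 11, 16, 19, 4, 29, 6, 7, 8, 0, 10, 1, 13, 12, 14, 23, 2, 22, 24, 3, 25, 27, 17, 15, 18, 20, 28, 21, 26, 5], ![9, 11, 16, 19, 4, 29, 6, 7, 8, 0, 10, 1, 13, 12, 14, 23, 2, 22, 24, 3, 25, 27, 17, 15, 18, 20, 28, 21, 26, 5], by decide, by decide⟩)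

/-- The 3-cycle `0 ↦ 1 ↦ 2 ↦ 0` in `Perm (Fin 3)`. -/
def c3 : Equiv.Perm (Fin 3) := ⟨![1, 2, 0], ![2, 0, 1], by decide, by decide⟩

/-- The homomorphism from `Multiplicative (ZMod 3)`: powers of `cElt`. -/
def fN : Multiplicative (ZMod 3) →* Equiv.Perm (Fin 13) × Equiv.Perm (Fin 30) where
  toFun x := cElt ^ (Multiplicative.toAdd x).val
  map_one' := by decide
  map_mul' := by decide

/-- The homomorphism from `Perm (Fin 3)`: a complement isomorphic to `S₃`. -/
def fK : Equiv.Perm (Fin 3) →* Equiv.Perm (Fin 13) × Equiv.Perm (Fin 30) where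
  toFun σ :=
    if σ = 1 then 1
    else if σ = Equiv.swap 0 1 then k01
    else if σ = Equiv.swap 0 2 then ka
    else if σ = Equiv.swap 1 2 then kb
    else if σ = c3 then k012
    else k021
  map_one' := by decide
  map_mul' := by decide

/-- The twisting homomorphism: odd permutations act by inversion on `ℤ/3`. -/
def signAut : ℤˣ →* MulAut (Multiplicative (ZMod 3)) where
  toFun u := if u = 1 then 1 else MulEquiv.inv (Multiplicative (ZMod 3))
  map_one' := if_pos rfl
  map_mul' u v := by
    have hinv : MulEquiv.inv (Multiplicative (ZMod 3)) * MulEquiv.inv (Multiplicative (ZMod 3))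
        = 1 := by
      ext x
      simp [MulAut.mul_apply]
    rcases Int.units_eq_one_or u with rfl | rfl <;>
      rcases Int.units_eq_one_or v with rfl | rfl <;>
        simp [hinv, (by decide : ¬((-1 : ℤˣ) = 1))]

def φA : Equiv.Perm (Fin 3) →* MulAut (Multiplicative (ZMod 3)) :=
  signAut.comp Equiv.Perm.sign

lemma compat' : ∀ (σ : Equiv.Perm (Fin 3)) (x : Multiplicative (ZMod 3)),
    fN (φA σ x) = fK σ * fN x * (fK σ)⁻¹ := by decide

/-- The lifted homomorphism from the semidirect product. -/
def Φ : SemidirectProduct (Multiplicative (ZMod 3)) (Equiv.Perm (Fin 3)) φA →*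
    Equiv.Perm (Fin 13) × Equiv.Perm (Fin 30) :=
  SemidirectProduct.lift fN fK (fun σ => MonoidHom.ext fun x => by
    simpa using compat' σ x)

lemma Φ_injective : Function.Injective Φ := by
  rw [injective_iff_map_eq_one]
  intro g hg
  rcases g with ⟨x, σ⟩
  have key : ∀ (x : Multiplicative (ZMod 3)) (σ : Equiv.Perm (Fin 3)),
      fN x * fK σ = 1 → x = 1 ∧ σ = 1 := by decide
  have hxσ : fN x * fK σ = 1 := hg
  obtain ⟨hx, hσ⟩ := key x σ hxσ
  ext <;> simp [hx, hσ]

lemma Φ_mem (g : SemidirectProduct (Multiplicative (ZMod 3)) (Equiv.Perm (Fin 3)) φA) :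
    Φ g ∈ latAut := by
  have h1 : ∀ x : Multiplicative (ZMod 3), ∀ h l,
      l ∈ lineSets h ↔ (fN x).2 l ∈ lineSets ((fN x).1 h) := by decide
  have h2 : ∀ σ : Equiv.Perm (Fin 3), ∀ h l,
      l ∈ lineSets h ↔ (fK σ).2 l ∈ lineSets ((fK σ).1 h) := by decide
  exact latAut.mul_mem (mem_latAut.2 (h1 g.left)) (mem_latAut.2 (h2 g.right))

def Φ' : SemidirectProduct (Multiplicative (ZMod 3)) (Equiv.Perm (Fin 3)) φA →* latAut :=
  Φ.codRestrict latAut Φ_mem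

lemma Φ'_injective : Function.Injective Φ' := by
  intro a b hab
  exact Φ_injective (Subtype.ext_iff.1 hab)

/-- The semidirect product is equivalent (as a type) to the product. -/
def sdpEquiv : SemidirectProduct (Multiplicative (ZMod 3)) (Equiv.Perm (Fin 3)) φA ≃
    Multiplicative (ZMod 3) × Equiv.Perm (Fin 3) where
  toFun g := (g.left, g.right)
  invFun p := ⟨p.1, p.2⟩
  left_inv g := rfl
  right_inv p := rfl

lemma card_sdp :
    Nat.card (SemidirectProduct (Multiplicative (ZMod 3)) (Equiv.Perm (Fin 3)) φA) = 18 := by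
  rw [Nat.card_congr sdpEquiv, Nat.card_prod]
  simp only [Nat.card_eq_fintype_card, Fintype.card_perm, Fintype.card_fin]
  rfl

lemma card_latAut : Nat.card latAut = 18 := by
  refine le_antisymm card_latAut_le ?_
  calc (18 : ℕ) = Nat.card (SemidirectProduct (Multiplicative (ZMod 3))
        (Equiv.Perm (Fin 3)) φA) := card_sdp.symm
    _ ≤ Nat.card latAut := Nat.card_le_card_of_injective _ Φ'_injective

lemma Φ'_bijective : Function.Bijective Φ' := by
  rw [Nat.bijective_iff_injective_and_card]
  exact ⟨Φ'_injective, card_sdp.trans card_latAut.symm⟩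

/-- The automorphism group of the intersection lattice of the
generic 13-hyperplane arrangement has order 18 and is isomorphic to a semidirect
product `(ℤ/3ℤ) ⋊ S₃`. -/
theorem stmt16 :
    Nat.card latAut = 18 ∧
    ∃ φ : Equiv.Perm (Fin 3) →* MulAut (Multiplicative (ZMod 3)),
      Nonempty (latAut ≃*
        SemidirectProduct (Multiplicative (ZMod 3)) (Equiv.Perm (Fin 3)) φ) := by
  refine ⟨card_latAut, φA, ⟨(MulEquiv.ofBijective Φ' Φ'_bijective).symm⟩⟩
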